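/- Let $N\geq 3$, $0<\mu<N$, $\delta>0$, and let $U_\varepsilon$ be as above. Then there is a constant $C>0$ such that for all small $\varepsilon>0$, $\int_{\mathbb{R}^N\setminus B_\delta}\int_{B_\delta}\frac{U_\varepsilon(x)^{2_\mu^*}U_\varepsilon(y)^{2_\mu^*}}{|x-y|^\mu}dx\,dy \leq C\,\varepsilon^{(2N-\mu)/2}$. -/

import Mathlib

open MeasureTheory
open scoped ENNReal

/-- Singular integral of `‖y‖^{-s}` over a ball is finite when `s < N`. -/
lemma lintegral_ball_rpow_neg_lt_top {N : ℕ} (hN : 1 ≤ N) {s R : ℝ}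
    (hs0 : 0 < s) (hsN : s < (N : ℝ)) (hR : 0 < R) :
    ∫⁻ y in Metric.ball (0 : EuclideanSpace ℝ (Fin N)) R,
      ENNReal.ofReal (‖y‖ ^ (-s)) < ⊤ := by
  haveI : Nonempty (Fin N) := ⟨⟨0, hN⟩⟩
  haveI : Nontrivial (EuclideanSpace ℝ (Fin N)) := by
    refine ⟨EuclideanSpace.single ⟨0, hN⟩ 1, 0, fun h => ?_⟩
    have := congrArg (fun v : EuclideanSpace ℝ (Fin N) => v ⟨0, hN⟩) h
    simp [EuclideanSpace.single_apply] at this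
  set E := EuclideanSpace ℝ (Fin N)
  set f : E → ℝ≥0∞ := fun y => ENNReal.ofReal (‖y‖ ^ (-s)) with hf
  set A : ℕ → Set E := fun k => Metric.ball 0 (R / 2 ^ k) \ Metric.ball 0 (R / 2 ^ (k + 1))
    with hA
  have hcover : Metric.ball (0 : E) R ⊆ {0} ∪ ⋃ k, A k := by
    intro y hy
    rcases eq_or_ne y 0 with rfl | hy0
    · exact Or.inl rfl
    have hy0' : 0 < ‖y‖ := norm_pos_iff.mpr hy0
    have hyR : ‖y‖ < R := by simpa [Metric.mem_ball, dist_zero_right] using hy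
    have hex : ∃ k : ℕ, R / 2 ^ (k + 1) ≤ ‖y‖ := by
      obtain ⟨k, hk⟩ := pow_unbounded_of_one_lt (R / ‖y‖) (one_lt_two (α := ℝ))
      refine ⟨k, ?_⟩
      rw [div_lt_iff₀ hy0'] at hk
      rw [div_le_iff₀ (by positivity), pow_succ]
      nlinarith [pow_pos (two_pos (α := ℝ)) k]
    refine Or.inr (Set.mem_iUnion.2 ⟨Nat.find hex, ?_, ?_⟩)
    · rw [Metric.mem_ball, dist_zero_right]
      rcases Nat.eq_zero_or_pos (Nat.find hex) with h0 | hpos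
      · rw [h0]; simpa using hyR
      · obtain ⟨m, hm⟩ := Nat.exists_eq_add_of_lt hpos
        have := Nat.find_min hex (m := m) (by omega)
        push_neg at this
        have hmeq : Nat.find hex = m + 1 := by omega
        rw [hmeq]
        exact this
    · rw [Metric.mem_ball, dist_zero_right]
      exact not_lt.2 (Nat.find_spec hex)
  have hkey : ∀ k : ℕ, (R / 2 ^ (k + 1)) ^ (-s) * (R / 2 ^ k) ^ (N : ℕ) =
      (R ^ ((N : ℝ) - s) * 2 ^ s) * ((2 : ℝ) ^ (s - (N : ℝ))) ^ k := by
    intro k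
    have hlog : ∀ j : ℕ, Real.log (R / 2 ^ j) = Real.log R - j * Real.log 2 := fun j => by
      rw [Real.log_div hR.ne' (by positivity), Real.log_pow]
    rw [show ((R / 2 ^ k) ^ (N : ℕ)) = (R / 2 ^ k) ^ ((N : ℕ) : ℝ) from
      (Real.rpow_natCast _ _).symm]
    rw [Real.rpow_def_of_pos (by positivity), Real.rpow_def_of_pos (by positivity),
      Real.rpow_def_of_pos hR, Real.rpow_def_of_pos two_pos, Real.rpow_def_of_pos two_pos,
      hlog, hlog, ← Real.exp_nat_mul, ← Real.exp_add, ← Real.exp_add, ← Real.exp_add,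
      Real.exp_eq_exp]
    push_cast
    ring
  have hterm : ∀ k, ∫⁻ y in A k, f y ≤
      (ENNReal.ofReal (R ^ ((N : ℝ) - s) * 2 ^ s) * volume (Metric.ball (0 : E) 1)) *
        ENNReal.ofReal ((2 : ℝ) ^ (s - (N : ℝ))) ^ k := by
    intro k
    have h2k1 : (0 : ℝ) < R / 2 ^ (k + 1) := by positivity
    have hb : ∀ y ∈ A k, f y ≤ ENNReal.ofReal ((R / 2 ^ (k + 1)) ^ (-s)) := by
      intro y hy
      refine ENNReal.ofReal_le_ofReal ?_
      refine Real.rpow_le_rpow_of_nonpos h2k1 ?_ (by linarith)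
      have h2 := hy.2
      rw [Metric.mem_ball, dist_zero_right, not_lt] at h2
      exact h2
    calc ∫⁻ y in A k, f y
        ≤ ∫⁻ _ in A k, ENNReal.ofReal ((R / 2 ^ (k + 1)) ^ (-s)) ∂volume :=
          setLIntegral_mono' (measurableSet_ball.diff measurableSet_ball) hb
      _ = ENNReal.ofReal ((R / 2 ^ (k + 1)) ^ (-s)) * volume (A k) := setLIntegral_const _ _
      _ ≤ ENNReal.ofReal ((R / 2 ^ (k + 1)) ^ (-s)) * volume (Metric.ball (0 : E) (R / 2 ^ k)) :=
          mul_le_mul' le_rfl (measure_mono Set.diff_subset)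
      _ = ENNReal.ofReal ((R / 2 ^ (k + 1)) ^ (-s)) *
            (ENNReal.ofReal ((R / 2 ^ k) ^ (N : ℕ)) * volume (Metric.ball (0 : E) 1)) := by
          rw [Measure.addHaar_ball _ _ (by positivity : (0 : ℝ) ≤ R / 2 ^ k),
            finrank_euclideanSpace_fin]
      _ = ENNReal.ofReal ((R / 2 ^ (k + 1)) ^ (-s) * (R / 2 ^ k) ^ (N : ℕ)) *
            volume (Metric.ball (0 : E) 1) := by
          rw [ENNReal.ofReal_mul (by positivity)]; ring
      _ = _ := by
          rw [hkey k, ENNReal.ofReal_mul (by positivity),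
            ENNReal.ofReal_pow (by positivity)]
          ring
  have hfin : ∑' k, ∫⁻ y in A k, f y < ⊤ := by
    refine lt_of_le_of_lt (ENNReal.tsum_le_tsum hterm) ?_
    rw [ENNReal.tsum_mul_left, ENNReal.tsum_geometric]
    refine ENNReal.mul_lt_top (ENNReal.mul_lt_top ENNReal.ofReal_lt_top measure_ball_lt_top) ?_
    rw [ENNReal.inv_lt_top]
    rw [tsub_pos_iff_lt]
    exact ENNReal.ofReal_lt_one.2
      (Real.rpow_lt_one_of_one_lt_of_neg one_lt_two (by linarith))
  calc ∫⁻ y in Metric.ball (0 : E) R, f y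
      ≤ ∫⁻ y in ({0} ∪ ⋃ k, A k : Set E), f y := lintegral_mono_set hcover
    _ ≤ (∫⁻ y in ({0} : Set E), f y) + ∫⁻ y in (⋃ k, A k : Set E), f y :=
        lintegral_union_le _ _ _
    _ ≤ 0 + ∑' k, ∫⁻ y in A k, f y :=
        add_le_add (le_of_eq (setLIntegral_measure_zero _ _ (measure_singleton 0)))
          (lintegral_iUnion_le _ _)
    _ < ⊤ := by rw [zero_add]; exact hfin

/-- Translation invariance for integrals over balls. -/
lemma lintegral_ball_sub_eq {N : ℕ} (x : EuclideanSpace ℝ (Fin N)) (r : ℝ)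
    (g : EuclideanSpace ℝ (Fin N) → ℝ≥0∞) :
    ∫⁻ y in Metric.ball x r, g (x - y) = ∫⁻ z in Metric.ball 0 r, g z := by
  have h := Measure.measurePreserving_sub_left (volume : Measure (EuclideanSpace ℝ (Fin N))) x
  have he : MeasurableEmbedding (fun y : EuclideanSpace ℝ (Fin N) => x - y) :=
    (Homeomorph.subLeft x).measurableEmbedding
  have key := h.setLIntegral_comp_emb he g (Metric.ball x r)
  have himg : (fun t : EuclideanSpace ℝ (Fin N) => x - t) '' Metric.ball x r
      = Metric.ball 0 r := by
    rw [Set.image_eq_preimage_of_inverse (g := fun t => x - t) (fun z => by simp)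
      (fun z => by simp)]
    ext z
    simp [Metric.mem_ball, dist_eq_norm, sub_sub_cancel_left]
  rw [key, himg]

/-- The Aubin-Talenti bubble `U_ε(x) = ε^{(2-N)/2}[N(N-2)]^{(N-2)/4}(1+|x/ε|²)^{-(N-2)/2}`. -/
noncomputable def bubble (N : ℕ) (ε : ℝ) (x : EuclideanSpace ℝ (Fin N)) : ℝ :=
  ε ^ (((2 : ℝ) - N) / 2) * ((N : ℝ) * ((N : ℝ) - 2)) ^ (((N : ℝ) - 2) / 4) *
    (1 + ‖x‖ ^ 2 / ε ^ 2) ^ (-(((N : ℝ) - 2) / 2))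

section BubbleAux

variable {N : ℕ} {ε p q : ℝ}

lemma bubble_rpow_eq (hN : 3 ≤ N) (hε : 0 < ε)
    (hpq : ((N : ℝ) - 2) / 2 * p = q) (x : EuclideanSpace ℝ (Fin N)) :
    bubble N ε x ^ p =
      (((N : ℝ) * ((N : ℝ) - 2)) ^ (((N : ℝ) - 2) / 4)) ^ p *
        (ε ^ (-q) * (1 + ‖x‖ ^ 2 / ε ^ 2) ^ (-q)) := by
  have hN3 : (3 : ℝ) ≤ (N : ℝ) := by exact_mod_cast hN
  have hbase : (0 : ℝ) < 1 + ‖x‖ ^ 2 / ε ^ 2 := by positivity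
  have h1 : (0 : ℝ) ≤ ε ^ (((2 : ℝ) - N) / 2) := Real.rpow_nonneg hε.le _
  have hK0 : (0 : ℝ) ≤ ((N : ℝ) * ((N : ℝ) - 2)) ^ (((N : ℝ) - 2) / 4) :=
    Real.rpow_nonneg (by nlinarith) _
  unfold bubble
  rw [Real.mul_rpow (mul_nonneg h1 hK0) (Real.rpow_nonneg hbase.le _),
    Real.mul_rpow h1 hK0, ← Real.rpow_mul hε.le, ← Real.rpow_mul hbase.le]
  rw [show ((2 : ℝ) - N) / 2 * p = -q by rw [← hpq]; ring,
    show (-(((N : ℝ) - 2) / 2)) * p = -q by rw [← hpq]; ring]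
  ring

lemma exp_log_helper1 {b c q : ℝ} (hb : 0 < b) (hc : 0 < c) :
    c ^ (-q) * (2 * (b / c)) ^ (-q) = 2 ^ (-q) * b ^ (-q) := by
  rw [Real.rpow_def_of_pos hc, Real.rpow_def_of_pos (by positivity),
    Real.rpow_def_of_pos two_pos, Real.rpow_def_of_pos hb,
    Real.log_mul (by norm_num) (by positivity), Real.log_div hb.ne' hc.ne',
    ← Real.exp_add, ← Real.exp_add, Real.exp_eq_exp]
  ring

lemma exp_log_helper2 {a b c q : ℝ} (ha : 0 < a) (hb : 0 < b) (hc : 0 < c) :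
    c ^ (-q) * ((a * (b / c)) ^ 2) ^ (-q) = a ^ (-(2 * q)) * b ^ (-(2 * q)) * c ^ q := by
  rw [Real.rpow_def_of_pos hc, Real.rpow_def_of_pos (by positivity),
    Real.rpow_def_of_pos ha, Real.rpow_def_of_pos hb, Real.rpow_def_of_pos hc,
    Real.log_pow, Real.log_mul ha.ne' (by positivity), Real.log_div hb.ne' hc.ne',
    ← Real.exp_add, ← Real.exp_add, ← Real.exp_add, Real.exp_eq_exp]
  push_cast
  ring

/-- Key bound 1: `U_ε(x)^p ≤ K 2^{-q} ‖x‖^{-q}` for `x ≠ 0`. -/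
lemma bubble_rpow_le_norm (hN : 3 ≤ N) (hε : 0 < ε) (hq : 0 < q)
    (hpq : ((N : ℝ) - 2) / 2 * p = q) {x : EuclideanSpace ℝ (Fin N)} (hx : x ≠ 0) :
    bubble N ε x ^ p ≤
      (((N : ℝ) * ((N : ℝ) - 2)) ^ (((N : ℝ) - 2) / 4)) ^ p * (2 ^ (-q) * ‖x‖ ^ (-q)) := by
  have hx' : 0 < ‖x‖ := norm_pos_iff.mpr hx
  have hK : (0 : ℝ) ≤ (((N : ℝ) * ((N : ℝ) - 2)) ^ (((N : ℝ) - 2) / 4)) ^ p :=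
    Real.rpow_nonneg
      (Real.rpow_nonneg (by nlinarith [show (3:ℝ) ≤ (N:ℝ) from by exact_mod_cast hN]) _) _
  rw [bubble_rpow_eq hN hε hpq]
  have h1 : 2 * (‖x‖ / ε) ≤ 1 + ‖x‖ ^ 2 / ε ^ 2 := by
    have h2 := sq_nonneg (‖x‖ / ε - 1)
    have h3 : (‖x‖ / ε) ^ 2 = ‖x‖ ^ 2 / ε ^ 2 := div_pow _ _ 2
    nlinarith
  have h2 : (1 + ‖x‖ ^ 2 / ε ^ 2) ^ (-q) ≤ (2 * (‖x‖ / ε)) ^ (-q) :=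
    Real.rpow_le_rpow_of_nonpos (by positivity) h1 (by linarith)
  refine le_trans (mul_le_mul_of_nonneg_left
    (mul_le_mul_of_nonneg_left h2 (Real.rpow_nonneg hε.le _)) hK) ?_
  rw [exp_log_helper1 hx' hε]

/-- Key bound 2: `U_ε(x)^p ≤ K (δ/(1+δ))^{-2q} ε^q (1+‖x‖)^{-2q}` for `δ ≤ ‖x‖`. -/
lemma bubble_rpow_le_out (hN : 3 ≤ N) (hε : 0 < ε) (hq : 0 < q)
    (hpq : ((N : ℝ) - 2) / 2 * p = q) {δ : ℝ} (hδ : 0 < δ)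
    {x : EuclideanSpace ℝ (Fin N)} (hx : δ ≤ ‖x‖) :
    bubble N ε x ^ p ≤
      (((N : ℝ) * ((N : ℝ) - 2)) ^ (((N : ℝ) - 2) / 4)) ^ p *
        ((δ / (1 + δ)) ^ (-(2 * q)) * (1 + ‖x‖) ^ (-(2 * q)) * ε ^ q) := by
  have hx0 : 0 < ‖x‖ := lt_of_lt_of_le hδ hx
  have hK : (0 : ℝ) ≤ (((N : ℝ) * ((N : ℝ) - 2)) ^ (((N : ℝ) - 2) / 4)) ^ p :=
    Real.rpow_nonneg
      (Real.rpow_nonneg (by nlinarith [show (3:ℝ) ≤ (N:ℝ) from by exact_mod_cast hN]) _) _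
  rw [bubble_rpow_eq hN hε hpq]
  have ha : 0 < δ / (1 + δ) := by positivity
  have hb : 0 < 1 + ‖x‖ := by positivity
  have h1 : (δ / (1 + δ) * ((1 + ‖x‖) / ε)) ^ 2 ≤ 1 + ‖x‖ ^ 2 / ε ^ 2 := by
    have key : δ / (1 + δ) * (1 + ‖x‖) ≤ ‖x‖ := by
      rw [div_mul_eq_mul_div, div_le_iff₀ (by linarith)]
      nlinarith
    have h2 : (δ / (1 + δ) * ((1 + ‖x‖) / ε)) ^ 2 = (δ / (1 + δ) * (1 + ‖x‖)) ^ 2 / ε ^ 2 := by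
      ring
    rw [h2]
    have h3 : (δ / (1 + δ) * (1 + ‖x‖)) ^ 2 ≤ ‖x‖ ^ 2 := by
      have := mul_pos ha hb
      nlinarith
    have h4 : (δ / (1 + δ) * (1 + ‖x‖)) ^ 2 / ε ^ 2 ≤ ‖x‖ ^ 2 / ε ^ 2 := by
      gcongr
    linarith
  have h2 : (1 + ‖x‖ ^ 2 / ε ^ 2) ^ (-q) ≤ ((δ / (1 + δ) * ((1 + ‖x‖) / ε)) ^ 2) ^ (-q) :=
    Real.rpow_le_rpow_of_nonpos (by positivity) h1 (by linarith)
  refine le_trans (mul_le_mul_of_nonneg_left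
    (mul_le_mul_of_nonneg_left h2 (Real.rpow_nonneg hε.le _)) hK) ?_
  rw [exp_log_helper2 ha hb hε]

end BubbleAux

/-- Exterior-interior estimate: `∬_{B_δᶜ × B_δ} U_ε^{2μ*} U_ε^{2μ*} / |x-y|^μ = O(ε^{(2N-μ)/2})`. -/
theorem bubble_exterior_interior_estimate (N : ℕ) (hN : 3 ≤ N) (δ : ℝ) (hδ : 0 < δ)
    (μ : ℝ) (hμ0 : 0 < μ) (hμN : μ < N) :
    ∃ C > (0 : ℝ), ∃ ε₀ > (0 : ℝ), ∀ ε : ℝ, 0 < ε → ε < ε₀ →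
      (∫⁻ x in (Metric.ball (0 : EuclideanSpace ℝ (Fin N)) δ)ᶜ,
        ∫⁻ y in Metric.ball (0 : EuclideanSpace ℝ (Fin N)) δ,
          ENNReal.ofReal (bubble N ε x ^ ((2 * (N : ℝ) - μ) / ((N : ℝ) - 2)) *
            bubble N ε y ^ ((2 * (N : ℝ) - μ) / ((N : ℝ) - 2)) / ‖x - y‖ ^ μ)) ≤
        ENNReal.ofReal (C * ε ^ ((2 * (N : ℝ) - μ) / 2)) := by
  have hN3 : (3 : ℝ) ≤ (N : ℝ) := by exact_mod_cast hN
  set p : ℝ := (2 * (N : ℝ) - μ) / ((N : ℝ) - 2) with hp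
  set q : ℝ := (2 * (N : ℝ) - μ) / 2 with hq
  have hq0 : 0 < q := by
    have h2Nμ : 0 < 2 * (N : ℝ) - μ := by linarith
    exact div_pos h2Nμ two_pos
  have hqN : q < (N : ℝ) := by rw [hq]; linarith
  have h2qN : (N : ℝ) < 2 * q := by rw [hq]; linarith
  have hpq : ((N : ℝ) - 2) / 2 * p = q := by
    rw [hp, hq]
    have hne : (N : ℝ) - 2 ≠ 0 := by linarith
    field_simp
  set K : ℝ := (((N : ℝ) * ((N : ℝ) - 2)) ^ (((N : ℝ) - 2) / 4)) ^ p with hK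
  have hK0 : 0 ≤ K := Real.rpow_nonneg (Real.rpow_nonneg (by nlinarith) _) _
  set B : Set (EuclideanSpace ℝ (Fin N)) := Metric.ball 0 δ with hB
  set A1 : ℝ := K * 2 ^ (-q) * (δ / 2) ^ (-μ) with hA1
  set A2 : ℝ := K * 2 ^ (-q) * (δ / 2) ^ (-q) with hA2
  have hA1n : 0 ≤ A1 :=
    mul_nonneg (mul_nonneg hK0 (Real.rpow_nonneg two_pos.le _)) (Real.rpow_nonneg (by positivity) _)
  have hA2n : 0 ≤ A2 :=
    mul_nonneg (mul_nonneg hK0 (Real.rpow_nonneg two_pos.le _)) (Real.rpow_nonneg (by positivity) _)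
  set cδ : ℝ := (δ / (1 + δ)) ^ (-(2 * q)) with hcδ
  have hcδ0 : 0 ≤ cδ := Real.rpow_nonneg (by positivity) _
  set I₁ : ℝ≥0∞ :=
    ∫⁻ y in Metric.ball (0 : EuclideanSpace ℝ (Fin N)) δ, ENNReal.ofReal (‖y‖ ^ (-q)) with hI₁def
  set I₂ : ℝ≥0∞ :=
    ∫⁻ z in Metric.ball (0 : EuclideanSpace ℝ (Fin N)) (δ / 2),
      ENNReal.ofReal (‖z‖ ^ (-μ)) with hI₂def
  set J : ℝ≥0∞ :=
    ∫⁻ x : EuclideanSpace ℝ (Fin N), ENNReal.ofReal ((1 + ‖x‖) ^ (-(2 * q))) with hJdef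
  have hI₁ : I₁ < ⊤ := lintegral_ball_rpow_neg_lt_top (by omega) hq0 hqN hδ
  have hI₂ : I₂ < ⊤ := lintegral_ball_rpow_neg_lt_top (by omega) hμ0 hμN (by linarith)
  have hJ : J < ⊤ := by
    have h := finite_integral_one_add_norm
      (E := EuclideanSpace ℝ (Fin N)) (μ := volume) (r := 2 * q)
      (by rw [finrank_euclideanSpace_fin]; exact h2qN)
    exact h
  set S : ℝ≥0∞ := ENNReal.ofReal A1 * I₁ + ENNReal.ofReal A2 * I₂ with hSdef
  have hS : S < ⊤ := ENNReal.add_lt_top.2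
    ⟨ENNReal.mul_lt_top ENNReal.ofReal_lt_top hI₁, ENNReal.mul_lt_top ENNReal.ofReal_lt_top hI₂⟩
  set T : ℝ≥0∞ := ENNReal.ofReal (K * cδ) * (S * J) with hTdef
  have hT : T < ⊤ := ENNReal.mul_lt_top ENNReal.ofReal_lt_top (ENNReal.mul_lt_top hS hJ)
  refine ⟨T.toReal + 1, by positivity, 1, one_pos, fun ε hε _ => ?_⟩
  have hbub : ∀ z : EuclideanSpace ℝ (Fin N), 0 ≤ bubble N ε z ^ p := fun z =>
    Real.rpow_nonneg (mul_nonneg (mul_nonneg (Real.rpow_nonneg hε.le _)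
      (Real.rpow_nonneg (by nlinarith) _)) (Real.rpow_nonneg (by positivity) _)) _
  have h0ae : ∀ᵐ y : EuclideanSpace ℝ (Fin N) ∂volume, y ≠ 0 := by
    haveI : Nonempty (Fin N) := ⟨⟨0, by omega⟩⟩
    haveI : Nontrivial (EuclideanSpace ℝ (Fin N)) := by
      refine ⟨EuclideanSpace.single ⟨0, by omega⟩ 1, 0, fun h => ?_⟩
      have := congrArg (fun v : EuclideanSpace ℝ (Fin N) => v ⟨0, by omega⟩) h
      simp [EuclideanSpace.single_apply] at this
    refine ae_iff.2 ?_
    rw [show {a : EuclideanSpace ℝ (Fin N) | ¬a ≠ 0} = {(0 : EuclideanSpace ℝ (Fin N))} by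
      ext z; simp]
    exact measure_singleton 0
  have hinner_y : ∀ x : EuclideanSpace ℝ (Fin N), δ ≤ ‖x‖ →
      (∫⁻ y in B, ENNReal.ofReal (bubble N ε y ^ p / ‖x - y‖ ^ μ)) ≤ S := by
    intro x hxδ
    have hae : ∀ᵐ y ∂(volume.restrict B),
        ENNReal.ofReal (bubble N ε y ^ p / ‖x - y‖ ^ μ) ≤
          ENNReal.ofReal (A1 * ‖y‖ ^ (-q)) +
            (Metric.ball x (δ / 2)).indicator
              (fun y => ENNReal.ofReal (A2 * ‖x - y‖ ^ (-μ))) y := by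
      filter_upwards [ae_restrict_mem measurableSet_ball, ae_restrict_of_ae h0ae] with y hyB hy0
      have hyδ : ‖y‖ < δ := by simpa [hB, Metric.mem_ball, dist_zero_right] using hyB
      have hxyne : x ≠ y := by
        intro h; rw [← h] at hyδ; exact absurd hxδ (not_le.2 hyδ)
      have hxy0 : 0 < ‖x - y‖ := by rwa [norm_sub_pos_iff]
      have hkey1 := bubble_rpow_le_norm (p := p) (q := q) hN hε hq0 hpq hy0
      rw [← hK] at hkey1
      by_cases hmem : y ∈ Metric.ball x (δ / 2)
      · rw [Set.indicator_of_mem hmem]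
        have hlt : ‖x - y‖ < δ / 2 := by
          rw [Metric.mem_ball, dist_comm, dist_eq_norm] at hmem; exact hmem
        have hyl : δ / 2 < ‖y‖ := by
          have h := norm_sub_norm_le x y
          linarith
        have hb2 : bubble N ε y ^ p ≤ A2 := by
          refine le_trans hkey1 ?_
          have hmono : ‖y‖ ^ (-q) ≤ (δ / 2) ^ (-q) :=
            Real.rpow_le_rpow_of_nonpos (by positivity) hyl.le (by linarith)
          calc K * (2 ^ (-q) * ‖y‖ ^ (-q)) ≤ K * (2 ^ (-q) * (δ / 2) ^ (-q)) :=
                mul_le_mul_of_nonneg_left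
                  (mul_le_mul_of_nonneg_left hmono (Real.rpow_nonneg two_pos.le _)) hK0
            _ = A2 := by rw [hA2]; ring
        refine le_trans ?_ (le_add_of_nonneg_left zero_le)
        refine ENNReal.ofReal_le_ofReal ?_
        rw [Real.rpow_neg (norm_nonneg _), div_eq_mul_inv]
        exact mul_le_mul_of_nonneg_right hb2 (by positivity)
      · rw [Set.indicator_of_notMem hmem, add_zero]
        have hge : δ / 2 ≤ ‖x - y‖ := by
          rw [Metric.mem_ball, dist_comm, dist_eq_norm] at hmem; exact not_lt.1 hmem
        refine ENNReal.ofReal_le_ofReal ?_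
        have h1 : ‖x - y‖ ^ (-μ) ≤ (δ / 2) ^ (-μ) :=
          Real.rpow_le_rpow_of_nonpos (by positivity) hge (by linarith)
        have h2 : bubble N ε y ^ p / ‖x - y‖ ^ μ = bubble N ε y ^ p * ‖x - y‖ ^ (-μ) := by
          rw [Real.rpow_neg (norm_nonneg _), div_eq_mul_inv]
        rw [h2]
        calc bubble N ε y ^ p * ‖x - y‖ ^ (-μ)
            ≤ (K * (2 ^ (-q) * ‖y‖ ^ (-q))) * (δ / 2) ^ (-μ) :=
              mul_le_mul hkey1 h1 (Real.rpow_nonneg (norm_nonneg _) _)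
                (mul_nonneg hK0 (by positivity))
          _ = A1 * ‖y‖ ^ (-q) := by rw [hA1]; ring
    have hterm1 : (∫⁻ y in B, ENNReal.ofReal (A1 * ‖y‖ ^ (-q))) = ENNReal.ofReal A1 * I₁ := by
      rw [hI₁def, ← hB, ← lintegral_const_mul' _ _ ENNReal.ofReal_ne_top]
      exact lintegral_congr fun y => by rw [← ENNReal.ofReal_mul hA1n]
    have hterm2 : (∫⁻ y in B, (Metric.ball x (δ / 2)).indicator
        (fun y => ENNReal.ofReal (A2 * ‖x - y‖ ^ (-μ))) y) ≤ ENNReal.ofReal A2 * I₂ := by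
      rw [lintegral_indicator measurableSet_ball, Measure.restrict_restrict measurableSet_ball]
      calc ∫⁻ y in Metric.ball x (δ / 2) ∩ B, ENNReal.ofReal (A2 * ‖x - y‖ ^ (-μ))
          ≤ ∫⁻ y in Metric.ball x (δ / 2), ENNReal.ofReal (A2 * ‖x - y‖ ^ (-μ)) :=
            lintegral_mono_set Set.inter_subset_left
        _ = ENNReal.ofReal A2 * ∫⁻ y in Metric.ball x (δ / 2), ENNReal.ofReal (‖x - y‖ ^ (-μ)) := by
            rw [← lintegral_const_mul' _ _ ENNReal.ofReal_ne_top]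
            exact lintegral_congr fun y => by rw [← ENNReal.ofReal_mul hA2n]
        _ = ENNReal.ofReal A2 * I₂ := by
            rw [hI₂def]
            congr 1
            exact lintegral_ball_sub_eq x (δ / 2) (fun z => ENNReal.ofReal (‖z‖ ^ (-μ)))
    calc ∫⁻ y in B, ENNReal.ofReal (bubble N ε y ^ p / ‖x - y‖ ^ μ)
        ≤ ∫⁻ y in B, (ENNReal.ofReal (A1 * ‖y‖ ^ (-q)) +
            (Metric.ball x (δ / 2)).indicator
              (fun y => ENNReal.ofReal (A2 * ‖x - y‖ ^ (-μ))) y) := lintegral_mono_ae hae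
      _ = (∫⁻ y in B, ENNReal.ofReal (A1 * ‖y‖ ^ (-q))) +
            ∫⁻ y in B, (Metric.ball x (δ / 2)).indicator
              (fun y => ENNReal.ofReal (A2 * ‖x - y‖ ^ (-μ))) y :=
          lintegral_add_left (by fun_prop) _
      _ ≤ ENNReal.ofReal A1 * I₁ + ENNReal.ofReal A2 * I₂ := by
          rw [hterm1]; exact add_le_add le_rfl hterm2
      _ = S := hSdef.symm
  have hx_bub : ∀ x : EuclideanSpace ℝ (Fin N), δ ≤ ‖x‖ →
      ENNReal.ofReal (bubble N ε x ^ p) ≤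
        ENNReal.ofReal (K * cδ) * ENNReal.ofReal (ε ^ q) *
          ENNReal.ofReal ((1 + ‖x‖) ^ (-(2 * q))) := by
    intro x hx
    rw [← ENNReal.ofReal_mul (mul_nonneg hK0 hcδ0),
      ← ENNReal.ofReal_mul (mul_nonneg (mul_nonneg hK0 hcδ0) (Real.rpow_nonneg hε.le _))]
    refine ENNReal.ofReal_le_ofReal ?_
    have hout := bubble_rpow_le_out (p := p) (q := q) hN hε hq0 hpq hδ hx
    rw [← hK, ← hcδ] at hout
    calc bubble N ε x ^ p ≤ K * (cδ * (1 + ‖x‖) ^ (-(2 * q)) * ε ^ q) := hout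
      _ = K * cδ * ε ^ q * (1 + ‖x‖) ^ (-(2 * q)) := by ring
  have hmain : ∀ x ∈ Bᶜ,
      (∫⁻ y in B, ENNReal.ofReal (bubble N ε x ^ p * bubble N ε y ^ p / ‖x - y‖ ^ μ)) ≤
        (ENNReal.ofReal (K * cδ) * ENNReal.ofReal (ε ^ q) * S) *
          ENNReal.ofReal ((1 + ‖x‖) ^ (-(2 * q))) := by
    intro x hx
    have hxδ : δ ≤ ‖x‖ := by
      simp only [hB, Set.mem_compl_iff, Metric.mem_ball, dist_zero_right, not_lt] at hx
      exact hx
    calc (∫⁻ y in B, ENNReal.ofReal (bubble N ε x ^ p * bubble N ε y ^ p / ‖x - y‖ ^ μ))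
        = ∫⁻ y in B, ENNReal.ofReal (bubble N ε x ^ p) *
            ENNReal.ofReal (bubble N ε y ^ p / ‖x - y‖ ^ μ) := by
          refine lintegral_congr fun y => ?_
          rw [mul_div_assoc, ENNReal.ofReal_mul (hbub x)]
      _ = ENNReal.ofReal (bubble N ε x ^ p) *
            ∫⁻ y in B, ENNReal.ofReal (bubble N ε y ^ p / ‖x - y‖ ^ μ) :=
          lintegral_const_mul' _ _ ENNReal.ofReal_ne_top
      _ ≤ (ENNReal.ofReal (K * cδ) * ENNReal.ofReal (ε ^ q) *
            ENNReal.ofReal ((1 + ‖x‖) ^ (-(2 * q)))) * S :=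
          mul_le_mul' (hx_bub x hxδ) (hinner_y x hxδ)
      _ = (ENNReal.ofReal (K * cδ) * ENNReal.ofReal (ε ^ q) * S) *
            ENNReal.ofReal ((1 + ‖x‖) ^ (-(2 * q))) := by ring
  calc (∫⁻ x in Bᶜ, ∫⁻ y in B,
        ENNReal.ofReal (bubble N ε x ^ p * bubble N ε y ^ p / ‖x - y‖ ^ μ))
      ≤ ∫⁻ x in Bᶜ, (ENNReal.ofReal (K * cδ) * ENNReal.ofReal (ε ^ q) * S) *
          ENNReal.ofReal ((1 + ‖x‖) ^ (-(2 * q))) :=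
        setLIntegral_mono' measurableSet_ball.compl hmain
    _ = (ENNReal.ofReal (K * cδ) * ENNReal.ofReal (ε ^ q) * S) *
          ∫⁻ x in Bᶜ, ENNReal.ofReal ((1 + ‖x‖) ^ (-(2 * q))) :=
        lintegral_const_mul' _ _
          (ENNReal.mul_ne_top (ENNReal.mul_ne_top ENNReal.ofReal_ne_top ENNReal.ofReal_ne_top)
            hS.ne)
    _ ≤ (ENNReal.ofReal (K * cδ) * ENNReal.ofReal (ε ^ q) * S) * J :=
        mul_le_mul' le_rfl (setLIntegral_le_lintegral _ _)
    _ = ENNReal.ofReal (ε ^ q) * T := by rw [hTdef]; ring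
    _ ≤ ENNReal.ofReal (ε ^ q) * ENNReal.ofReal (T.toReal + 1) := by
        refine mul_le_mul' le_rfl ?_
        conv_lhs => rw [← ENNReal.ofReal_toReal hT.ne]
        exact ENNReal.ofReal_le_ofReal (by linarith)
    _ = ENNReal.ofReal ((T.toReal + 1) * ε ^ q) := by
        rw [← ENNReal.ofReal_mul (Real.rpow_nonneg hε.le _), mul_comm]
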